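/- Let G be a simple graph on a finite vertex type V with |V| ≥ 4, let u ≠ v be adjacent vertices of G, and suppose G has a Hamiltonian cycle that traverses the edge {u,v}. Define the contraction G/e as the simple graph on the subtype {x : V // x ≠ v} in which a and b are adjacent if and only if a ≠ b and (a and b are adjacent in G, or a = u and v is adjacent to b in G, or b = u and v is adjacent to a in G). Then G/e has a Hamiltonian cycle. -/

import Mathlib

open SimpleGraph Walk

private lemma ne_of_isPath_not_nil {V : Type*} {G : SimpleGraph V} {s t : V} {P : G.Walk s t}
    (h : P.IsPath) (hn : ¬ P.Nil) : s ≠ t := by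
  cases P with
  | nil => simp at hn
  | cons h' q =>
      intro e
      subst e
      have hnd := h.support_nodup
      rw [Walk.support_cons, List.nodup_cons] at hnd
      exact hnd.1 q.end_mem_support

private lemma lift_walk {V : Type*} {v : V} {G : SimpleGraph V}
    {G' : SimpleGraph {x : V // x ≠ v}}
    (hle : ∀ a b : {x : V // x ≠ v}, G.Adj a.1 b.1 → G'.Adj a b) :
    ∀ {s t : V} (P : G.Walk s t), v ∉ P.support → ∀ (hs : s ≠ v) (ht : t ≠ v),
      ∃ Q : G'.Walk ⟨s, hs⟩ ⟨t, ht⟩, Q.support.map Subtype.val = P.support := by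
  intro s t P
  induction P with
  | nil =>
      intro _ hs ht
      exact ⟨Walk.nil, by simp⟩
  | @cons s m t h P ih =>
      intro hP hs ht
      rw [Walk.support_cons, List.mem_cons] at hP
      push_neg at hP
      have hm : m ≠ v := fun e => hP.2 (e ▸ P.start_mem_support)
      obtain ⟨Q, hQ⟩ := ih hP.2 hm ht
      exact ⟨Walk.cons (hle ⟨s, hs⟩ ⟨m, hm⟩ h) Q, by simp [hQ]⟩

private lemma build_cycle {V : Type*} [Fintype V] [DecidableEq V] {G : SimpleGraph V}
    {u v : V} (huv : u ≠ v)
    (G' : SimpleGraph {x : V // x ≠ v})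
    (hG' : ∀ a b : {x : V // x ≠ v},
      G'.Adj a b ↔ a ≠ b ∧
        (G.Adj a.1 b.1 ∨ (a.1 = u ∧ G.Adj v b.1) ∨ (b.1 = u ∧ G.Adj v a.1)))
    {s t : V} (hs : s ≠ v) (ht : t ≠ v) (P : G.Walk s t)
    (hPp : P.IsPath) (hu : u ∉ P.support) (hv : v ∉ P.support)
    (hcov : ∀ x, x ≠ u → x ≠ v → x ∈ P.support)
    (hvs : G.Adj v s) (hut : G.Adj u t) (hst : s ≠ t) :
    ∃ (a' : {x : V // x ≠ v}) (c' : G'.Walk a' a'), c'.IsHamiltonianCycle := by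
  have hle : ∀ a b : {x : V // x ≠ v}, G.Adj a.1 b.1 → G'.Adj a b := by
    intro a b hab
    rw [hG']
    exact ⟨fun e => G.loopless.irrefl _ (e ▸ hab), Or.inl hab⟩
  have hsu : s ≠ u := fun e => hu (e ▸ P.start_mem_support)
  have htu : t ≠ u := fun e => hu (e ▸ P.end_mem_support)
  have hA : G'.Adj ⟨u, huv⟩ ⟨s, hs⟩ := by
    rw [hG']
    exact ⟨fun e => hsu (congrArg Subtype.val e).symm, Or.inr (Or.inl ⟨rfl, hvs⟩)⟩
  have hB : G'.Adj ⟨t, ht⟩ ⟨u, huv⟩ := by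
    rw [hG']
    exact ⟨fun e => htu (congrArg Subtype.val e), Or.inl hut.symm⟩
  obtain ⟨Q, hQ⟩ := lift_walk hle P hv hs ht
  have hQnd : Q.support.Nodup := by
    have := hPp.support_nodup
    rw [← hQ] at this
    exact this.of_map _
  have huQ : (⟨u, huv⟩ : {x : V // x ≠ v}) ∉ Q.support := by
    intro h
    exact hu (hQ ▸ List.mem_map_of_mem (f := Subtype.val) h)
  refine ⟨⟨u, huv⟩, Walk.cons hA (Q.concat hB), ?_⟩
  have hsupp : (Q.concat hB).support = Q.support ++ [⟨u, huv⟩] := by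
    rw [Walk.support_concat]
  have hcyc : (Walk.cons hA (Q.concat hB)).IsCycle := by
    rw [Walk.cons_isCycle_iff]
    constructor
    · apply Walk.IsPath.mk'
      rw [hsupp, List.nodup_append]
      exact ⟨hQnd, List.nodup_singleton _, by
        intro z hz w hw e
        rw [List.mem_singleton] at hw
        subst hw; subst e; exact huQ hz⟩
    · rw [Walk.edges_concat, List.concat_eq_append, List.mem_append, List.mem_singleton]
      rintro (h | h)
      · exact huQ (Q.fst_mem_support_of_mem_edges h)
      · rw [Sym2.eq_iff] at h
        rcases h with ⟨h1, h2⟩ | ⟨_, h2⟩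
        · rw [Subtype.ext_iff] at h2
          exact hsu h2
        · rw [Subtype.ext_iff] at h2
          exact hst h2
  rw [Walk.isHamiltonianCycle_iff_isCycle_and_support_count_tail_eq_one]
  refine ⟨hcyc, fun z => ?_⟩
  rw [Walk.support_cons, List.tail_cons, hsupp, @List.count_append _ instBEqOfDecidableEq]
  by_cases hz : z = ⟨u, huv⟩
  · subst hz
    rw [@List.count_eq_zero _ instBEqOfDecidableEq _ _ _ |>.2 huQ, @List.count_singleton _ instBEqOfDecidableEq]
    simp
  · have hz1u : z.1 ≠ u := fun e => hz (Subtype.ext e)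
    have hzP : z.1 ∈ P.support := hcov z.1 hz1u z.2
    have hzQ : z ∈ Q.support := by
      rw [← hQ] at hzP
      obtain ⟨y, hy, hy'⟩ := List.mem_map.1 hzP
      exact (Subtype.ext hy' : y = z) ▸ hy
    rw [@List.count_eq_one_of_mem _ instBEqOfDecidableEq _ _ _ hQnd hzQ]
    simp [List.count_singleton, hz, Ne.symm hz]

theorem hamiltonicity_contraction {V : Type*} [Fintype V] [DecidableEq V]
    (G : SimpleGraph V) (hV : 4 ≤ Fintype.card V)
    (u v : V) (huv : u ≠ v) (hadj : G.Adj u v)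
    (a : V) (c : G.Walk a a) (hc : c.IsHamiltonianCycle)
    (he : s(u, v) ∈ c.edges)
    (G' : SimpleGraph {x : V // x ≠ v})
    (hG' : ∀ a b : {x : V // x ≠ v},
      G'.Adj a b ↔ a ≠ b ∧
        (G.Adj a.1 b.1 ∨ (a.1 = u ∧ G.Adj v b.1) ∨ (b.1 = u ∧ G.Adj v a.1))) :
    ∃ (a' : {x : V // x ≠ v}) (c' : G'.Walk a' a'), c'.IsHamiltonianCycle := by
  classical
  have hu' : u ∈ c.support := hc.mem_support u
  have hcc := Walk.isHamiltonianCycle_iff_isCycle_and_support_count_tail_eq_one.1 hc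
  have hdham : (c.rotate u hu').IsHamiltonianCycle := by
    rw [Walk.isHamiltonianCycle_iff_isCycle_and_support_count_tail_eq_one]
    refine ⟨hcc.1.rotate _, fun z => ?_⟩
    rw [(Walk.support_rotate c u hu').perm.count_eq]
    exact hcc.2 z
  have hde : s(u, v) ∈ (c.rotate u hu').edges := (c.rotate_edges u hu').perm.mem_iff.2 he
  obtain ⟨x, hux, q, hd_eq⟩ := Walk.not_nil_iff.1 hdham.isCycle.not_nil
  rw [hd_eq] at hdham hde
  -- facts about q
  have hqlen : q.length = Fintype.card V - 1 := by
    have := hdham.length_eq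
    rw [Walk.length_cons] at this
    omega
  have hqcount : ∀ z, q.support.count z = 1 := by
    have := (Walk.isHamiltonianCycle_iff_isCycle_and_support_count_tail_eq_one.1 hdham).2
    intro z
    have h2 := this z
    rwa [Walk.support_cons, List.tail_cons] at h2
  have hqham : q.IsHamiltonian := hqcount
  have hqp : q.IsPath := hqham.isPath
  rw [Walk.edges_cons, List.mem_cons] at hde
  rcases hde with hde | hde
  · -- Case A : first edge of the cycle is s(u,v), so x = v
    have hxv : v = x := Sym2.congr_right.1 hde
    subst hxv
    -- q : Walk v u
    have hqnn : ¬ q.Nil := by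
      rw [Walk.not_nil_iff_lt_length]
      omega
    obtain ⟨w, hvw, r, hq_eq⟩ := Walk.not_nil_iff.1 hqnn
    rw [hq_eq] at hqp hqcount hqlen
    have hrp : r.IsPath := hqp.of_cons
    have hvr : v ∉ r.support := by
      have := hqp.support_nodup
      rw [Walk.support_cons, List.nodup_cons] at this
      exact this.1
    have hrcov : ∀ z, z ≠ v → z ∈ r.support := by
      intro z hzv
      have := hqcount z
      rw [Walk.support_cons, List.count_cons] at this
      have : r.support.count z = 1 := by
        simpa [Ne.symm hzv] using this
      exact List.count_pos_iff.1 (by omega)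
    have hrlen : r.length = Fintype.card V - 2 := by
      rw [Walk.length_cons] at hqlen; omega
    have hrnn : ¬ r.reverse.Nil := by
      rw [Walk.not_nil_iff_lt_length, Walk.length_reverse]
      omega
    obtain ⟨t, hut, P₀, hrrev⟩ := Walk.not_nil_iff.1 hrnn
    -- r.reverse = cons hut P₀ : Walk u w, P₀ : Walk t w
    have hrrp : r.reverse.IsPath := hrp.reverse
    rw [hrrev] at hrrp
    have hP₀p : P₀.IsPath := hrrp.of_cons
    have huP₀ : u ∉ P₀.support := by
      have := hrrp.support_nodup
      rw [Walk.support_cons, List.nodup_cons] at this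
      exact this.1
    have hsupp_rev : r.support = (Walk.cons hut P₀).support.reverse := by
      rw [← hrrev, Walk.support_reverse, List.reverse_reverse]
    have hvP₀ : v ∉ P₀.support := by
      intro h
      apply hvr
      rw [hsupp_rev, List.mem_reverse, Walk.support_cons]
      exact List.mem_cons_of_mem _ h
    have hP₀cov : ∀ z, z ≠ u → z ≠ v → z ∈ P₀.support := by
      intro z hzu hzv
      have := hrcov z hzv
      rw [hsupp_rev, List.mem_reverse, Walk.support_cons, List.mem_cons] at this
      exact this.resolve_left hzu
    have hP₀nn : ¬ P₀.Nil := by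
      rw [Walk.not_nil_iff_lt_length]
      have : r.reverse.length = r.length := Walk.length_reverse r
      rw [hrrev, Walk.length_cons] at this
      omega
    have htw : t ≠ w := ne_of_isPath_not_nil hP₀p hP₀nn
    -- use P := P₀.reverse : Walk w t
    refine build_cycle huv G' hG'
      (fun e => hvP₀ (e ▸ P₀.end_mem_support))
      (fun e => hvP₀ (e ▸ P₀.start_mem_support)) P₀.reverse hP₀p.reverse ?_ ?_ ?_ hvw hut htw.symm
    · rw [Walk.support_reverse, List.mem_reverse]; exact huP₀
    · rw [Walk.support_reverse, List.mem_reverse]; exact hvP₀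
    · intro z hzu hzv
      rw [Walk.support_reverse, List.mem_reverse]
      exact hP₀cov z hzu hzv
  · -- Case B : edge s(u,v) lies in q
    have hq'p : q.reverse.IsPath := hqp.reverse
    have hde' : s(u, v) ∈ q.reverse.edges := by
      rw [Walk.edges_reverse, List.mem_reverse]; exact hde
    have hq'nn : ¬ q.reverse.Nil := by
      rw [Walk.not_nil_iff_lt_length, Walk.length_reverse]
      omega
    obtain ⟨y, huy, r, hq'eq⟩ := Walk.not_nil_iff.1 hq'nn
    rw [hq'eq] at hq'p hde'
    have hur : u ∉ r.support := by
      have := hq'p.support_nodup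
      rw [Walk.support_cons, List.nodup_cons] at this
      exact this.1
    have hyv : v = y := by
      rw [Walk.edges_cons, List.mem_cons] at hde'
      rcases hde' with h | h
      · exact Sym2.congr_right.1 h
      · exact absurd (r.fst_mem_support_of_mem_edges h) hur
    subst hyv
    -- r : Walk v x
    have hrp : r.IsPath := hq'p.of_cons
    have hrcov : ∀ z, z ≠ u → z ∈ r.support := by
      intro z hzu
      have := hqcount z
      have hrev : q.reverse.support.count z = 1 := by
        rw [Walk.support_reverse, List.count_reverse]; exact this
      rw [hq'eq, Walk.support_cons, List.count_cons] at hrev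
      have : r.support.count z = 1 := by simpa [Ne.symm hzu] using hrev
      exact List.count_pos_iff.1 (by omega)
    have hrlen : r.length = Fintype.card V - 2 := by
      have : q.reverse.length = q.length := Walk.length_reverse q
      rw [hq'eq, Walk.length_cons] at this
      omega
    have hrnn : ¬ r.Nil := by
      rw [Walk.not_nil_iff_lt_length]; omega
    obtain ⟨w, hvw, P, hreq⟩ := Walk.not_nil_iff.1 hrnn
    rw [hreq] at hrp hrcov hrlen hur
    have hPp : P.IsPath := hrp.of_cons
    have hvP : v ∉ P.support := by
      have := hrp.support_nodup
      rw [Walk.support_cons, List.nodup_cons] at this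
      exact this.1
    have huP : u ∉ P.support := by
      intro h
      exact hur (by rw [Walk.support_cons]; exact List.mem_cons_of_mem _ h)
    have hPcov : ∀ z, z ≠ u → z ≠ v → z ∈ P.support := by
      intro z hzu hzv
      have := hrcov z hzu
      rw [Walk.support_cons, List.mem_cons] at this
      exact this.resolve_left hzv
    have hPnn : ¬ P.Nil := by
      rw [Walk.not_nil_iff_lt_length]
      rw [Walk.length_cons] at hrlen
      omega
    have hwx : w ≠ x := ne_of_isPath_not_nil hPp hPnn
    exact build_cycle huv G' hG'
      (fun e => hvP (e ▸ P.start_mem_support))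
      (fun e => hvP (e ▸ P.end_mem_support))
      P hPp huP hvP hPcov hvw hux hwx
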